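/- Fix H ∈ (0,1) and an integer r ≥ 3. Then ρ_H(r) = r^{2H} · Σ_{l=1}^{∞} [2H(2H−1)(2H−2)⋯(2H−2l+1)/(2l)!] · (4 − 4^l) · r^{−2l}, where the series converges absolutely. -/

import Mathlib

open Real

/-- `ρ_H(r)` from the paper. Here `x ^ y` with real exponent denotes `Real.rpow`. -/
noncomputable def rhoH (H : ℝ) (r : ℤ) : ℝ :=
  (-(|(r : ℝ) - 2| ^ (2 * H)) + 4 * |(r : ℝ) - 1| ^ (2 * H) - 6 * |(r : ℝ)| ^ (2 * H)
      + 4 * |(r : ℝ) + 1| ^ (2 * H) - |(r : ℝ) + 2| ^ (2 * H)) / 2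

/-- The general term of the series: for `l ≥ 1`,
`(2H(2H−1)⋯(2H−2l+1)/(2l)!) · (4 − 4^l) · r^{−2l}`. -/
noncomputable def seriesTerm (H : ℝ) (r : ℕ) (l : ℕ) : ℝ :=
  (∏ j ∈ Finset.range (2 * l), (2 * H - (j : ℝ))) / (2 * l).factorial
    * (4 - (4 : ℝ) ^ l) / (r : ℝ) ^ (2 * l)

open Filter Set

namespace AuxBinom

noncomputable def bc (a : ℝ) (n : ℕ) : ℝ :=
  (∏ j ∈ Finset.range n, (a - (j : ℝ))) / (n.factorial : ℝ)

lemma bc_zero (a : ℝ) : bc a 0 = 1 := by simp [bc]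

lemma bc_succ (a : ℝ) (n : ℕ) : ((n : ℝ) + 1) * bc a (n + 1) = (a - n) * bc a n := by
  have h0 : (n.factorial : ℝ) ≠ 0 := Nat.cast_ne_zero.2 n.factorial_ne_zero
  have h1 : ((n : ℝ) + 1) ≠ 0 := by positivity
  have h : ((n + 1).factorial : ℝ) = ((n : ℝ) + 1) * n.factorial := by
    rw [Nat.factorial_succ]; push_cast; ring
  rw [bc, bc, Finset.prod_range_succ, h]
  field_simp

lemma abs_bc_succ {a : ℝ} (ha0 : 0 < a) (ha2 : a < 2) {n : ℕ} (hn : 1 ≤ n) :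
    |bc a (n + 1)| * ((n : ℝ) + 1) ≤ |bc a n| * n := by
  have hn' : (1 : ℝ) ≤ n := by exact_mod_cast hn
  have h := congrArg abs (bc_succ a n)
  rw [abs_mul, abs_mul] at h
  have h1 : |(n : ℝ) + 1| = (n : ℝ) + 1 := abs_of_pos (by linarith)
  rw [h1] at h
  have h2 : |a - (n : ℝ)| ≤ (n : ℝ) := abs_le.2 ⟨by linarith, by linarith⟩
  calc |bc a (n + 1)| * ((n : ℝ) + 1) = |a - (n : ℝ)| * |bc a n| := by
        rw [← h]; ring
    _ ≤ (n : ℝ) * |bc a n| := by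
        apply mul_le_mul_of_nonneg_right h2 (abs_nonneg _)
    _ = |bc a n| * n := by ring

lemma summable_aux {w : ℕ → ℝ} (hw : ∀ n, 1 ≤ n → |w (n + 1)| ≤ 3 / 4 * |w n|) :
    Summable w := by
  apply summable_of_ratio_norm_eventually_le (r := 3 / 4) (by norm_num)
  filter_upwards [eventually_ge_atTop 1] with n hn
  simpa [Real.norm_eq_abs] using hw n hn

lemma summable_u {a : ℝ} (ha0 : 0 < a) (ha2 : a < 2) :
    Summable (fun n : ℕ => |bc a n| * (3 / 4 : ℝ) ^ n) := by
  apply summable_aux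
  intro n hn
  have h1 : |bc a (n + 1)| ≤ |bc a n| := by
    have := abs_bc_succ ha0 ha2 hn
    have hn' : (1:ℝ) ≤ n := by exact_mod_cast hn
    nlinarith [abs_nonneg (bc a (n + 1)), abs_nonneg (bc a n)]
  have h2 : (0:ℝ) < (3/4:ℝ)^n := by positivity
  have h3 : |bc a (n+1)| * (3/4:ℝ)^(n+1) ≤ |bc a n| * (3/4:ℝ)^(n+1) := by
    apply mul_le_mul_of_nonneg_right h1 (by positivity)
  have he : ∀ m : ℕ, |(|bc a m| * (3/4:ℝ)^m)| = |bc a m| * (3/4:ℝ)^m := fun m => by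
    apply abs_of_nonneg; positivity
  rw [he, he]
  calc |bc a (n+1)| * (3/4:ℝ)^(n+1) ≤ |bc a n| * (3/4:ℝ)^(n+1) := h3
    _ = 3/4 * (|bc a n| * (3/4:ℝ)^n) := by rw [pow_succ]; ring

lemma summable_v {a : ℝ} (ha0 : 0 < a) (ha2 : a < 2) :
    Summable (fun n : ℕ => |bc a n| * n * (3 / 4 : ℝ) ^ (n - 1)) := by
  apply summable_aux
  intro n hn
  have hsub : n + 1 - 1 = n := rfl
  have hsub2 : n - 1 + 1 = n := by omega
  have he : ∀ k : ℕ, |(|bc a k| * k * (3/4:ℝ)^(k-1))| = |bc a k| * k * (3/4:ℝ)^(k-1) :=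
    fun k => by apply abs_of_nonneg; positivity
  rw [he, he, hsub]
  have key : |bc a (n+1)| * ((n:ℝ)+1) ≤ |bc a n| * n := abs_bc_succ ha0 ha2 (by omega)
  have : |bc a (n+1)| * ((n:ℝ)+1) * (3/4:ℝ)^n ≤ |bc a n| * n * (3/4:ℝ)^n :=
    mul_le_mul_of_nonneg_right key (by positivity)
  calc |bc a (n+1)| * (↑(n+1)) * (3/4:ℝ)^n = |bc a (n+1)| * ((n:ℝ)+1) * (3/4:ℝ)^n := by
        push_cast; ring
    _ ≤ |bc a n| * n * (3/4:ℝ)^n := this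
    _ = 3/4 * (|bc a n| * n * (3/4:ℝ)^(n-1)) := by
        have hp : (3/4:ℝ)^n = (3/4:ℝ)^(n-1) * (3/4) := by rw [← pow_succ, hsub2]
        rw [hp]; ring

lemma summable_S {a : ℝ} (ha0 : 0 < a) (ha2 : a < 2) {y : ℝ} (hy : |y| ≤ 3 / 4) :
    Summable (fun n : ℕ => bc a n * y ^ n) := by
  apply Summable.of_norm_bounded (summable_u ha0 ha2)
  intro n
  rw [Real.norm_eq_abs, abs_mul, abs_pow]
  exact mul_le_mul_of_nonneg_left (pow_le_pow_left₀ (abs_nonneg y) hy n) (abs_nonneg _)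

lemma hasSum_binomial {a : ℝ} (ha0 : 0 < a) (ha2 : a < 2) {x : ℝ} (hx : |x| < 3 / 4) :
    HasSum (fun n : ℕ => bc a n * x ^ n) ((1 + x) ^ a) := by
  set t : Set ℝ := Ioo (-(3/4) : ℝ) (3/4) with ht
  have hmem : ∀ {y : ℝ}, y ∈ t ↔ |y| < 3/4 := fun {y} => by
    rw [ht, mem_Ioo, ← abs_lt]
  have hxt : x ∈ t := hmem.2 hx
  have h0t : (0:ℝ) ∈ t := hmem.2 (by norm_num)
  set S : ℝ → ℝ := fun z => ∑' n : ℕ, bc a n * z ^ n with hS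
  set D : ℝ → ℝ := fun y => ∑' n : ℕ, bc a n * ((n : ℝ) * y ^ (n - 1)) with hD
  -- derivative of S
  have hderiv : ∀ (n : ℕ), ∀ y ∈ t, HasDerivAt (fun z : ℝ => bc a n * z ^ n)
      (bc a n * ((n : ℝ) * y ^ (n - 1))) y := fun n y _ => (hasDerivAt_pow n y).const_mul _
  have hbound : ∀ (n : ℕ), ∀ y ∈ t, ‖bc a n * ((n : ℝ) * y ^ (n - 1))‖ ≤
      |bc a n| * n * (3/4 : ℝ) ^ (n - 1) := by
    intro n y hy
    rw [Real.norm_eq_abs, abs_mul, abs_mul, abs_pow, Nat.abs_cast]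
    have : |y| ^ (n-1) ≤ (3/4:ℝ)^(n-1) :=
      pow_le_pow_left₀ (abs_nonneg y) (le_of_lt (hmem.1 hy)) _
    calc |bc a n| * ((n:ℝ) * |y|^(n-1)) ≤ |bc a n| * ((n:ℝ) * (3/4:ℝ)^(n-1)) := by
          apply mul_le_mul_of_nonneg_left _ (abs_nonneg _)
          exact mul_le_mul_of_nonneg_left this (Nat.cast_nonneg n)
      _ = |bc a n| * n * (3/4:ℝ)^(n-1) := by ring
  have hS' : ∀ y ∈ t, HasDerivAt S (D y) y := by
    intro y hy
    exact hasDerivAt_tsum_of_isPreconnected (summable_v ha0 ha2) isOpen_Ioo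
      (isPreconnected_Ioo) hderiv hbound h0t
      (summable_S ha0 ha2 (by norm_num)) hy
  -- the ODE
  have hODE : ∀ y ∈ t, (1 + y) * D y = a * S y := by
    intro y hy
    have hyle : |y| ≤ 3/4 := le_of_lt (hmem.1 hy)
    have hsumD : Summable (fun n : ℕ => bc a n * ((n : ℝ) * y ^ (n - 1))) :=
      Summable.of_norm_bounded (summable_v ha0 ha2) (fun n => hbound n y hy)
    have hDsum : HasSum (fun n : ℕ => bc a n * ((n : ℝ) * y ^ (n - 1))) (D y) := hsumD.hasSum
    -- shift
    have hshift : HasSum (fun n : ℕ => (a - n) * (bc a n * y ^ n)) (D y) := by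
      have h2 : HasSum (fun n : ℕ => bc a n * ((n : ℝ) * y ^ (n - 1)))
          (D y + ∑ i ∈ Finset.range 1, bc a i * ((i : ℝ) * y ^ (i - 1))) := by
        simpa using hDsum
      have h3 := (hasSum_nat_add_iff (f := fun n : ℕ => bc a n * ((n : ℝ) * y ^ (n - 1))) 1).2 h2
      have h1 : HasSum (fun n : ℕ => bc a (n+1) * (((n:ℝ)+1) * y ^ n)) (D y) := by
        convert h3 using 2 with n
        · rfl
        push_cast
        norm_num
      convert h1 using 2 with n
      linear_combination (-(y ^ n)) * bc_succ a n
    have hmul : HasSum (fun n : ℕ => (n : ℝ) * (bc a n * y ^ n)) (y * D y) := by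
      have hmy := hDsum.mul_left y
      convert hmy using 2 with n
      · rfl
      cases n with
      | zero => simp
      | succ m =>
        simp only [Nat.add_sub_cancel]
        push_cast
        ring
    have hP : HasSum (fun n : ℕ => bc a n * y ^ n) (S y) :=
      (summable_S ha0 ha2 hyle).hasSum
    have hsum1 : HasSum (fun n : ℕ => (a - n) * (bc a n * y ^ n) + (n : ℝ) * (bc a n * y ^ n))
        (D y + y * D y) := hshift.add hmul
    have hsum2 : HasSum (fun n : ℕ => a * (bc a n * y ^ n)) (D y + y * D y) := by
      convert hsum1 using 2 with n
      ring
    have huniq : a * S y = D y + y * D y := (hP.mul_left a).unique hsum2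
    calc (1 + y) * D y = D y + y * D y := by ring
      _ = a * S y := huniq.symm
  -- the quotient function h is constant
  set h : ℝ → ℝ := fun z => S z * (1 + z) ^ (-a) with hh
  have hd : ∀ y ∈ t, HasDerivAt h 0 y := by
    intro y hy
    have hy1 : (0:ℝ) < 1 + y := by
      have := abs_lt.1 (hmem.1 hy); linarith
    have hbase : HasDerivAt (fun z : ℝ => 1 + z) 1 y := by
      simpa using (hasDerivAt_id y).const_add (1 : ℝ)
    have hrpow : HasDerivAt (fun z : ℝ => (1 + z) ^ (-a)) (1 * (-a) * (1 + y) ^ (-a - 1)) y :=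
      hbase.rpow_const (Or.inl (ne_of_gt hy1))
    have hprod := (hS' y hy).mul hrpow
    have hzero : D y * (1 + y) ^ (-a) + S y * (1 * (-a) * (1 + y) ^ (-a - 1)) = 0 := by
      have e1 : (1 + y) ^ (-a) = (1 + y) ^ (-a - 1) * (1 + y) := by
        rw [← Real.rpow_add_one (ne_of_gt hy1) (-a - 1)]
        congr 1
        ring
      rw [e1]
      linear_combination ((1 + y) ^ (-a - 1)) * hODE y hy
    rw [hzero] at hprod
    exact hprod
  have habs : |x| < 3/4 := hx
  have hconst : h x = h 0 := by
    rcases le_or_gt 0 x with hx0 | hx0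
    · have hsub : Icc (0:ℝ) x ⊆ t := by
        intro z hz
        apply hmem.2
        rw [abs_lt]
        have := abs_lt.1 habs
        constructor
        · linarith [hz.1]
        · linarith [hz.2, this.2]
      have := constant_of_has_deriv_right_zero (f := h) (a := (0:ℝ)) (b := x)
        (fun z hz => ((hd z (hsub hz)).continuousAt.continuousWithinAt))
        (fun z hz => (hd z (hsub (Ico_subset_Icc_self hz))).hasDerivWithinAt)
      exact this x (right_mem_Icc.2 hx0)
    · have hsub : Icc x (0:ℝ) ⊆ t := by
        intro z hz
        apply hmem.2
        rw [abs_lt]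
        have := abs_lt.1 habs
        constructor
        · linarith [hz.1, this.1]
        · linarith [hz.2]
      have := constant_of_has_deriv_right_zero (f := h) (a := x) (b := (0:ℝ))
        (fun z hz => ((hd z (hsub hz)).continuousAt.continuousWithinAt))
        (fun z hz => (hd z (hsub (Ico_subset_Icc_self hz))).hasDerivWithinAt)
      exact (this 0 (right_mem_Icc.2 (le_of_lt hx0))).symm
  have hS0 : S 0 = 1 := by
    have : S 0 = ∑' n : ℕ, bc a n * (0:ℝ) ^ n := rfl
    rw [this, tsum_eq_single 0 (fun n hn => by simp [zero_pow hn])]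
    simp [bc_zero]
  have hh0 : h 0 = 1 := by
    have : h 0 = S 0 * ((1:ℝ) + 0) ^ (-a) := rfl
    rw [this, hS0]
    norm_num
  have hx1 : (0:ℝ) < 1 + x := by
    have := abs_lt.1 habs; linarith
  have hSx : S x = (1 + x) ^ a := by
    have h1 : S x * (1 + x) ^ (-a) = 1 := hconst.trans hh0
    have h2 : (1 + x) ^ (-a) = ((1 + x) ^ a)⁻¹ := Real.rpow_neg (le_of_lt hx1) a
    have h3 : (1 + x) ^ a ≠ 0 := ne_of_gt (Real.rpow_pos_of_pos hx1 a)
    rw [h2] at h1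
    have h4 : S x / (1 + x) ^ a = 1 := by rw [div_eq_mul_inv]; exact h1
    exact (div_eq_one_iff_eq h3).1 h4
  have hfin := (summable_S ha0 ha2 (le_of_lt habs)).hasSum
  rwa [show (∑' n : ℕ, bc a n * x ^ n) = S x from rfl, hSx] at hfin

end AuxBinom

open AuxBinom in
theorem stmt_3 (H : ℝ) (hH : H ∈ Set.Ioo (0 : ℝ) 1) (r : ℕ) (hr : 3 ≤ r) :
    Summable (fun l : ℕ => |seriesTerm H r (l + 1)|) ∧
      rhoH H (r : ℤ) = (r : ℝ) ^ (2 * H) * ∑' l : ℕ, seriesTerm H r (l + 1) := by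
  obtain ⟨hH0, hH1⟩ := hH
  set a : ℝ := 2 * H with ha
  have ha0 : 0 < a := by rw [ha]; linarith
  have ha2 : a < 2 := by rw [ha]; linarith
  have hr3 : (3 : ℝ) ≤ (r : ℝ) := by exact_mod_cast hr
  have hrpos : (0 : ℝ) < (r : ℝ) := by linarith
  have hrne : (r : ℝ) ≠ 0 := ne_of_gt hrpos
  set x : ℝ := (r : ℝ)⁻¹ with hxdef
  have hx0 : 0 < x := inv_pos.2 hrpos
  have hrx : (r : ℝ) * x = 1 := mul_inv_cancel₀ hrne
  have hx3 : x ≤ 1 / 3 := by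
    rw [hxdef]
    rw [show (1 : ℝ) / 3 = (3 : ℝ)⁻¹ by norm_num]
    exact inv_anti₀ (by norm_num) hr3
  -- the four binomial series
  have h1 : HasSum (fun n : ℕ => bc a n * (-(2 * x)) ^ n) ((1 + -(2 * x)) ^ a) :=
    hasSum_binomial ha0 ha2 (by rw [abs_lt]; constructor <;> nlinarith)
  have h2 : HasSum (fun n : ℕ => bc a n * (-x) ^ n) ((1 + -x) ^ a) :=
    hasSum_binomial ha0 ha2 (by rw [abs_lt]; constructor <;> nlinarith)
  have h3 : HasSum (fun n : ℕ => bc a n * x ^ n) ((1 + x) ^ a) :=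
    hasSum_binomial ha0 ha2 (by rw [abs_lt]; constructor <;> nlinarith)
  have h4 : HasSum (fun n : ℕ => bc a n * (2 * x) ^ n) ((1 + 2 * x) ^ a) :=
    hasSum_binomial ha0 ha2 (by rw [abs_lt]; constructor <;> nlinarith)
  set F : ℕ → ℝ := fun n => (-1) * (bc a n * (-(2 * x)) ^ n) +
      (4 * (bc a n * (-x) ^ n) + (4 * (bc a n * x ^ n) + (-1) * (bc a n * (2 * x) ^ n)))
    with hFdef
  set T : ℝ := (-1) * ((1 + -(2 * x)) ^ a) +
      (4 * ((1 + -x) ^ a) + (4 * ((1 + x) ^ a) + (-1) * ((1 + 2 * x) ^ a))) with hTdef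
  have hF : HasSum F T :=
    (h1.mul_left (-1)).add ((h2.mul_left 4).add ((h3.mul_left 4).add (h4.mul_left (-1))))
  have hF0 : F 0 = 6 := by
    rw [hFdef]
    simp [bc_zero]
    norm_num
  -- shifted series
  have hG : HasSum (fun n : ℕ => F (n + 1)) (T - 6) := by
    apply (hasSum_nat_add_iff (f := F) 1).2
    convert hF using 1
    · rfl
    rw [Finset.sum_range_one, hF0]
    ring
  -- only even indices survive
  have hinj : Function.Injective (fun l : ℕ => 2 * l + 1) := fun p q h => by dsimp only at h; omega
  have hvan : ∀ n ∉ Set.range (fun l : ℕ => 2 * l + 1), F (n + 1) = 0 := by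
    intro n hn
    have hev : Even n := by
      rcases Nat.even_or_odd n with he | ho
      · exact he
      · exfalso
        obtain ⟨k, hk⟩ := ho
        exact hn ⟨k, by dsimp only; omega⟩
    obtain ⟨m, hm⟩ := hev
    have hn1 : n + 1 = 2 * m + 1 := by omega
    rw [hn1, hFdef]
    dsimp only
    have hodd : Odd (2 * m + 1) := ⟨m, rfl⟩
    rw [hodd.neg_pow (2 * x), hodd.neg_pow x]
    ring
  have hE : HasSum (fun l : ℕ => F (2 * l + 2)) (T - 6) := by
    have := (hinj.hasSum_iff hvan).2 hG
    exact this
  -- identify terms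
  have hsT : ∀ l : ℕ, seriesTerm H r (l + 1) =
      bc a (2 * l + 2) * (4 - (4 : ℝ) ^ (l + 1)) * x ^ (2 * l + 2) := by
    intro l
    have h2l : 2 * (l + 1) = 2 * l + 2 := by ring
    rw [seriesTerm, h2l, bc, ← ha, hxdef, inv_pow]
    ring
  have hterm : ∀ l : ℕ, F (2 * l + 2) = 2 * seriesTerm H r (l + 1) := by
    intro l
    have hev : Even (2 * l + 2) := ⟨l + 1, by ring⟩
    have h2p : (2 : ℝ) ^ (2 * l + 2) = 4 ^ (l + 1) := by
      rw [show (4 : ℝ) = 2 ^ 2 by norm_num, ← pow_mul]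
      congr 1
      try ring
    rw [hsT l, hFdef]
    dsimp only
    rw [hev.neg_pow (2 * x), hev.neg_pow x, mul_pow (2 : ℝ) x, h2p]
    ring
  have hST : HasSum (fun l : ℕ => seriesTerm H r (l + 1)) ((T - 6) / 2) := by
    have hdiv := hE.div_const 2
    have heq : (fun l : ℕ => F (2 * l + 2) / 2) = fun l => seriesTerm H r (l + 1) :=
      funext fun l => by rw [hterm l]; ring
    rwa [heq] at hdiv
  constructor
  · -- summability of absolute values
    have hu := summable_u ha0 ha2
    have hcomp : Summable (fun l : ℕ => |bc a (2 * l + 2)| * (3 / 4 : ℝ) ^ (2 * l + 2)) := by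
      have := hu.comp_injective (i := fun l : ℕ => 2 * l + 2) (fun p q h => by dsimp only at h; omega)
      exact this
    apply Summable.of_nonneg_of_le (fun l => abs_nonneg _) _ hcomp
    intro l
    rw [hsT l]
    have h4l : (4 : ℝ) ≤ 4 ^ (l + 1) := by
      calc (4 : ℝ) = 4 ^ 1 := (pow_one 4).symm
        _ ≤ 4 ^ (l + 1) := pow_le_pow_right₀ (by norm_num) (by omega)
    have habs4 : |4 - (4 : ℝ) ^ (l + 1)| ≤ 4 ^ (l + 1) := by
      rw [abs_le]
      constructor <;> nlinarith
    have hxpow : x ^ (2 * l + 2) ≤ (1 / 3 : ℝ) ^ (2 * l + 2) :=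
      pow_le_pow_left₀ (le_of_lt hx0) hx3 _
    have e1 : (1 / 3 : ℝ) ^ (2 * l + 2) = (1 / 9 : ℝ) ^ (l + 1) := by
      rw [show (1 / 9 : ℝ) = (1 / 3) ^ 2 by norm_num, ← pow_mul]
      congr 1
      try ring
    have e2 : (3 / 4 : ℝ) ^ (2 * l + 2) = (9 / 16 : ℝ) ^ (l + 1) := by
      rw [show (9 / 16 : ℝ) = (3 / 4) ^ 2 by norm_num, ← pow_mul]
      congr 1
      try ring
    have key : |4 - (4 : ℝ) ^ (l + 1)| * x ^ (2 * l + 2) ≤ (3 / 4 : ℝ) ^ (2 * l + 2) := by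
      calc |4 - (4 : ℝ) ^ (l + 1)| * x ^ (2 * l + 2)
          ≤ (4 : ℝ) ^ (l + 1) * (1 / 3 : ℝ) ^ (2 * l + 2) := by
            apply mul_le_mul habs4 hxpow (by positivity) (by positivity)
        _ = (4 / 9 : ℝ) ^ (l + 1) := by
            rw [e1, ← mul_pow]
            norm_num
        _ ≤ (9 / 16 : ℝ) ^ (l + 1) := by
            apply pow_le_pow_left₀ (by norm_num) (by norm_num)
        _ = (3 / 4 : ℝ) ^ (2 * l + 2) := e2.symm
    calc |bc a (2 * l + 2) * (4 - (4 : ℝ) ^ (l + 1)) * x ^ (2 * l + 2)|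
        = |bc a (2 * l + 2)| * (|4 - (4 : ℝ) ^ (l + 1)| * x ^ (2 * l + 2)) := by
          rw [abs_mul, abs_mul, abs_of_pos (pow_pos hx0 _)]
          ring
      _ ≤ |bc a (2 * l + 2)| * (3 / 4 : ℝ) ^ (2 * l + 2) :=
          mul_le_mul_of_nonneg_left key (abs_nonneg _)
  · -- the identity
    rw [hST.tsum_eq]
    have key : ∀ k : ℝ, -2 ≤ k → k ≤ 2 → (r : ℝ) ^ a * (1 + k * x) ^ a = ((r : ℝ) + k) ^ a := by
      intro k hk1 hk2
      have hpos : (0 : ℝ) ≤ 1 + k * x := by nlinarith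
      rw [← Real.mul_rpow (le_of_lt hrpos) hpos]
      congr 1
      calc (r : ℝ) * (1 + k * x) = (r : ℝ) + k * ((r : ℝ) * x) := by ring
        _ = (r : ℝ) + k := by rw [hrx]; ring
    have k1 : (r : ℝ) ^ a * (1 + -(2 * x)) ^ a = ((r : ℝ) - 2) ^ a := by
      have := key (-2) (by norm_num) (by norm_num)
      rw [show (1 : ℝ) + (-2) * x = 1 + -(2 * x) by ring] at this
      rw [this]; congr 1; try ring
    have k2 : (r : ℝ) ^ a * (1 + -x) ^ a = ((r : ℝ) - 1) ^ a := by
      have := key (-1) (by norm_num) (by norm_num)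
      rw [show (1 : ℝ) + (-1) * x = 1 + -x by ring] at this
      rw [this]; congr 1; try ring
    have k3 : (r : ℝ) ^ a * (1 + x) ^ a = ((r : ℝ) + 1) ^ a := by
      have := key 1 (by norm_num) (by norm_num)
      rw [show (1 : ℝ) + 1 * x = 1 + x by ring] at this
      rw [this]
    have k4 : (r : ℝ) ^ a * (1 + 2 * x) ^ a = ((r : ℝ) + 2) ^ a := by
      have := key 2 (by norm_num) (by norm_num)
      rw [show (1 : ℝ) + 2 * x = 1 + 2 * x by ring] at this
      rw [this]
    have hrho : rhoH H (r : ℤ) = (-(((r : ℝ) - 2) ^ a) + 4 * ((r : ℝ) - 1) ^ a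
        - 6 * ((r : ℝ)) ^ a + 4 * ((r : ℝ) + 1) ^ a - ((r : ℝ) + 2) ^ a) / 2 := by
      rw [rhoH, ← ha]
      have c0 : ((r : ℤ) : ℝ) = (r : ℝ) := by push_cast; ring
      rw [c0]
      rw [abs_of_nonneg (by linarith : (0:ℝ) ≤ (r : ℝ) - 2),
        abs_of_nonneg (by linarith : (0:ℝ) ≤ (r : ℝ) - 1),
        abs_of_nonneg (by linarith : (0:ℝ) ≤ (r : ℝ)),
        abs_of_nonneg (by linarith : (0:ℝ) ≤ (r : ℝ) + 1),
        abs_of_nonneg (by linarith : (0:ℝ) ≤ (r : ℝ) + 2)]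
    rw [hrho, hTdef]
    calc (-(((r : ℝ) - 2) ^ a) + 4 * ((r : ℝ) - 1) ^ a - 6 * ((r : ℝ)) ^ a
          + 4 * ((r : ℝ) + 1) ^ a - ((r : ℝ) + 2) ^ a) / 2
        = (-((r : ℝ) ^ a * (1 + -(2 * x)) ^ a) + 4 * ((r : ℝ) ^ a * (1 + -x) ^ a)
          - 6 * ((r : ℝ)) ^ a + 4 * ((r : ℝ) ^ a * (1 + x) ^ a)
          - (r : ℝ) ^ a * (1 + 2 * x) ^ a) / 2 := by
          rw [k1, k2, k3, k4]
      _ = (r : ℝ) ^ a * (((-1) * ((1 + -(2 * x)) ^ a) + (4 * ((1 + -x) ^ a)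
            + (4 * ((1 + x) ^ a) + (-1) * ((1 + 2 * x) ^ a))) - 6) / 2) := by
          ring
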